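/- Let a,b > 0. A point (x,y) ∈ ℝ² satisfies G_{b,a}(G_{b,a}(x,y)) = (x,y) but is not a fixed point of G_{b,a} if and only if R(x,y) := x²y² + a x² - xy + b y² + ab = 0 and (x,y) is not a fixed point, i.e. the 2-periodic points of G_{b,a} lie exactly on the set {V_{b,a}(x,y) = -ab}. -/

import Mathlib

/-- The map `G_β(x,y) = (y, -x + y/(β+y²))`. -/
noncomputable def Gmap (β : ℝ) (p : ℝ × ℝ) : ℝ × ℝ :=
  (p.2, -p.1 + p.2 / (β + p.2 ^ 2))

/-- `V_{b,a}(x,y) = a x² + b y² - xy + x²y²`. -/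
noncomputable def Vba (a b : ℝ) (p : ℝ × ℝ) : ℝ :=
  a * p.1 ^ 2 + b * p.2 ^ 2 - p.1 * p.2 + p.1 ^ 2 * p.2 ^ 2

/-- A non-fixed point is `2`-periodic for `G_{b,a} = G_b ∘ G_a` iff it lies on
`{R = 0} = {V_{b,a} = -ab}`, where `R(x,y) = x²y² + ax² - xy + by² + ab`. -/
theorem stmt9 (a b : ℝ) (ha : 0 < a) (hb : 0 < b) (p : ℝ × ℝ) :
    (Gmap b (Gmap a (Gmap b (Gmap a p))) = p ∧ Gmap b (Gmap a p) ≠ p) ↔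
      (p.1 ^ 2 * p.2 ^ 2 + a * p.1 ^ 2 - p.1 * p.2 + b * p.2 ^ 2 + a * b = 0 ∧
        Gmap b (Gmap a p) ≠ p) := by
  obtain ⟨x, y⟩ := p
  dsimp only
  have hay : (a + y ^ 2) ≠ 0 := by positivity
  set z : ℝ := -x + y / (a + y ^ 2) with hzdef
  have hbz : (b + z ^ 2) ≠ 0 := by positivity
  set w : ℝ := -y + z / (b + z ^ 2) with hwdef
  have haw : (a + w ^ 2) ≠ 0 := by positivity
  have hbx : (b + x ^ 2) ≠ 0 := by positivity
  have hE1 : (x + z) * (a + y ^ 2) = y := by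
    rw [hzdef]; field_simp; ring
  have hE2 : (y + w) * (b + z ^ 2) = z := by
    rw [hwdef]; field_simp; ring
  have hGG : Gmap b (Gmap a (x, y)) = (z, w) := by
    simp [Gmap, hzdef, hwdef]
  rw [hGG]
  have hGG2 : Gmap b (Gmap a (z, w)) =
      (-z + w / (a + w ^ 2),
       -w + (-z + w / (a + w ^ 2)) / (b + (-z + w / (a + w ^ 2)) ^ 2)) := by
    simp [Gmap]
  rw [hGG2]
  clear_value w z
  constructor
  · rintro ⟨h4, h2⟩
    refine ⟨?_, h2⟩
    rw [Prod.mk.injEq] at h4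
    obtain ⟨hu, hv⟩ := h4
    rw [hu] at hv
    have hE3 : (x + z) * (a + w ^ 2) = w := by
      field_simp at hu; linear_combination -hu
    have hE4 : (y + w) * (b + x ^ 2) = x := by
      field_simp at hv; linear_combination -hv
    have hne : z ≠ x ∨ w ≠ y := by
      rw [Ne, Prod.mk.injEq, not_and_or] at h2; exact h2
    have hst : (x + z) * (y + w) = 1 := by
      rcases hne with h | h
      · have F2 : (z - x) * ((y + w) * (x + z) - 1) = 0 := by
          linear_combination hE2 - hE4
        rcases mul_eq_zero.mp F2 with h' | h'
        · exact absurd (by linarith) h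
        · linarith [h']
      · have F1 : (y - w) * ((x + z) * (y + w) - 1) = 0 := by
          linear_combination hE1 - hE3
        rcases mul_eq_zero.mp F1 with h' | h'
        · exact absurd (by linarith) h
        · linarith [h']
    linear_combination ((y + w) * (b + x ^ 2)) * hE1 + y * hE4 -
      (a + y ^ 2) * (b + x ^ 2) * hst
  · rintro ⟨hR, h2⟩
    refine ⟨?_, h2⟩
    have hxz : x * z = b := mul_right_cancel₀ hay (by linear_combination x * hE1 - hR)
    have hE4 : (y + w) * (b + x ^ 2) = x := mul_right_cancel₀ hbz
      (by linear_combination (b + x ^ 2) * hE2 + (x - z) * hxz)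
    have hyw : y * w = a := mul_right_cancel₀ hbx (by linear_combination y * hE4 - hR)
    have hE3 : (x + z) * (a + w ^ 2) = w := mul_right_cancel₀ hay
      (by linear_combination (a + w ^ 2) * hE1 - (y - w) * hyw)
    have hu : -z + w / (a + w ^ 2) = x := by
      field_simp; linear_combination -hE3
    rw [Prod.mk.injEq]
    refine ⟨hu, ?_⟩
    rw [hu]
    field_simp; linear_combination -hE4
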